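/- Let μ be a locally determined positive measure on Σ, X a Banach space, and F : Ω → X weakly μ-measurable. Then F is Pettis integrable if and only if F is locally Pettis integrable and the vector measure ν_F : Σ^f → X is strongly additive (ν_F(B_n) → 0 for every disjoint sequence {B_n} ⊂ Σ^f). In particular, if X contains no subspace isomorphic to c₀ and ν_F is bounded, then local Pettis integrability of F implies Pettis integrability. -/

import Mathlib

open MeasureTheory ENNReal
open scoped ENNReal

noncomputable section

variable {Ω : Type*} [MeasurableSpace Ω]
variable {X : Type*} [NormedAddCommGroup X] [NormedSpace ℝ X] [CompleteSpace X]

/-- `F` is weakly `μ`-measurable. -/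
def WeaklyMeasurable (μ : Measure Ω) (F : Ω → X) : Prop :=
  ∀ x' : StrongDual ℝ X, AEStronglyMeasurable (fun t => x' (F t)) μ

/-- `F` is Dunford integrable. -/
def DunfordIntegrable (μ : Measure Ω) (F : Ω → X) : Prop :=
  WeaklyMeasurable μ F ∧ ∀ x' : StrongDual ℝ X, Integrable (fun t => x' (F t)) μ

/-- The Dunford norm `sup_{‖x*‖ ≤ 1} ∫ |⟨F, x*⟩| dμ` (in `ℝ≥0∞`). -/
def dunfordNorm (μ : Measure Ω) (F : Ω → X) : ℝ≥0∞ :=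
  ⨆ (x' : StrongDual ℝ X) (_ : ‖x'‖ ≤ 1), ∫⁻ t, ENNReal.ofReal |x' (F t)| ∂μ

/-- `x` is the Pettis integral of `F` over `A`. -/
def IsPettisIntegralOn (μ : Measure Ω) (F : Ω → X) (A : Set Ω) (x : X) : Prop :=
  ∀ x' : StrongDual ℝ X, x' x = ∫ t in A, x' (F t) ∂μ

/-- `F` is Pettis integrable. -/
def PettisIntegrable (μ : Measure Ω) (F : Ω → X) : Prop :=
  DunfordIntegrable μ F ∧ ∀ A : Set Ω, MeasurableSet A → ∃ x : X, IsPettisIntegralOn μ F A x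

-- The Pettis integral of `F` over `A` (junk value `0` if it does not exist).
open Classical in
def pettisIntegral (μ : Measure Ω) (F : Ω → X) (A : Set Ω) : X :=
  if h : ∃ x : X, IsPettisIntegralOn μ F A x then h.choose else 0

/-- The δ-ring `Σ^f` of measurable sets of finite measure. -/
def finiteMeasureSets (μ : Measure Ω) : Set (Set Ω) :=
  {B | MeasurableSet B ∧ μ B < ∞}

/-- `F` is locally Pettis integrable. -/
def LocPettisIntegrable (μ : Measure Ω) (F : Ω → X) : Prop :=
  WeaklyMeasurable μ F ∧ ∀ B ∈ finiteMeasureSets μ, PettisIntegrable μ (B.indicator F)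

/-- `F` is locally Bochner integrable. -/
def LocBochnerIntegrable (μ : Measure Ω) (F : Ω → X) : Prop :=
  AEStronglyMeasurable F μ ∧ ∀ B ∈ finiteMeasureSets μ, Integrable (B.indicator F) μ

/-- The variation of a scalar set function `lam` defined on a δ-ring `R`,
evaluated at `A`: the supremum of `Σ_j |lam A_j|` over finite disjoint families
of members of `R` contained in `A`. -/
def scalarVariation (R : Set (Set Ω)) (lam : Set Ω → ℝ) (A : Set Ω) : ℝ≥0∞ :=
  ⨆ (P : Finset (Set Ω)) (_ : ∀ B ∈ P, B ∈ R ∧ B ⊆ A)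
    (_ : (P : Set (Set Ω)).PairwiseDisjoint id), ∑ B ∈ P, ENNReal.ofReal |lam B|

/-- The variation of a vector set function `ν` defined on a δ-ring `R`. -/
def vectorVariation (R : Set (Set Ω)) (ν : Set Ω → X) (A : Set Ω) : ℝ≥0∞ :=
  ⨆ (P : Finset (Set Ω)) (_ : ∀ B ∈ P, B ∈ R ∧ B ⊆ A)
    (_ : (P : Set (Set Ω)).PairwiseDisjoint id), ∑ B ∈ P, ENNReal.ofReal ‖ν B‖

/-- The semivariation of a vector set function `ν` defined on a δ-ring `R`. -/
def semivariation (R : Set (Set Ω)) (ν : Set Ω → X) (A : Set Ω) : ℝ≥0∞ :=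
  ⨆ (x' : StrongDual ℝ X) (_ : ‖x'‖ ≤ 1),
    scalarVariation R (fun B => x' (ν B)) A

/-- `μ` is semi-finite. -/
def SemiFinite (μ : Measure Ω) : Prop :=
  ∀ A : Set Ω, MeasurableSet A → 0 < μ A →
    ∃ B ⊆ A, MeasurableSet B ∧ 0 < μ B ∧ μ B < ∞

/-- `μ` is locally determined: it is semi-finite and a set is measurable as soon as
its intersection with every finite-measure set is measurable. -/
def LocallyDetermined (μ : Measure Ω) : Prop :=
  SemiFinite μ ∧ ∀ A : Set Ω,
    (∀ B ∈ finiteMeasureSets μ, MeasurableSet (A ∩ B)) → MeasurableSet A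



section Proofs
open Filter
open scoped ZeroAtInfty
set_option linter.unusedSectionVars false
set_option linter.unusedVariables false
set_option maxHeartbeats 1000000

/-- strong additivity of the indefinite Pettis integral. -/
def StronglyAdditive (μ : Measure Ω) (F : Ω → X) : Prop :=
  ∀ B : ℕ → Set Ω, (∀ n, B n ∈ finiteMeasureSets μ) →
    Pairwise (Function.onFun Disjoint B) →
    Filter.Tendsto (fun n => pettisIntegral μ F (B n)) Filter.atTop (nhds 0)

/-- Rosenthal's lemma (combinatorial form). -/
lemma rosenthal (d : ℕ → ℕ → ℝ) (hd : ∀ n m, 0 ≤ d n m) {K : ℝ}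
    (hK : ∀ n (s : Finset ℕ), ∑ m ∈ s, d n m ≤ K) {ε : ℝ} (hε : 0 < ε) :
    ∃ M : Set ℕ, M.Infinite ∧ ∀ n ∈ M, ∀ s : Finset ℕ,
      (↑s ⊆ M \ {n}) → ∑ m ∈ s, d n m ≤ ε := by
  by_contra hcon
  push_neg at hcon
  have hwit : ∀ M : Set ℕ, M.Infinite → ∃ n ∈ M, ∃ s : Finset ℕ,
      ↑s ⊆ M \ {n} ∧ ε < ∑ m ∈ s, d n m := by
    intro M hM
    obtain ⟨n, hn, s, hs, hεs⟩ := hcon M hM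
    exact ⟨n, hn, s, hs, hεs⟩
  -- main induction
  have main : ∀ k : ℕ, ∃ (M : Set ℕ) (t : ℕ → Finset ℕ), M.Infinite ∧
      ∀ n ∈ M, ((k:ℝ) * ε ≤ ∑ m ∈ t n, d n m) ∧ (↑(t n) ∩ (M \ {n}) = (∅ : Set ℕ)) := by
    intro k
    induction k with
    | zero =>
      exact ⟨Set.univ, fun _ => ∅, Set.infinite_univ,
        fun n _ => ⟨by simp, by simp⟩⟩
    | succ k ih =>
      obtain ⟨M, t, hMinf, hinv⟩ := ih
      classical
      set p : ℕ → Prop := fun x => x ∈ M with hp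
      have hpinf : (setOf p).Infinite := hMinf
      set e : ℕ → ℕ := Nat.nth p with he
      have heinj : Function.Injective e := Nat.nth_injective hpinf
      have hemem : ∀ i, e i ∈ M := fun i => Nat.nth_mem_of_infinite hpinf i
      set N : ℕ → Set ℕ := fun j => Set.range (fun i => e (Nat.pair j i)) with hN
      have hNM : ∀ j, N j ⊆ M := by
        rintro j x ⟨i, rfl⟩
        exact hemem _
      have hNinf : ∀ j, (N j).Infinite := by
        intro j
        apply Set.infinite_range_of_injective
        intro i i' hii
        have := heinj hii
        exact (Nat.pair_eq_pair.1 this).2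
      have hNdisj : ∀ j j', j ≠ j' → ∀ x, x ∈ N j → x ∉ N j' := by
        rintro j j' hjj x ⟨i, rfl⟩ ⟨i', hx⟩
        have := heinj hx
        exact hjj (Nat.pair_eq_pair.1 this.symm).1
      have hchoose : ∀ j : ℕ, ∃ n ∈ N j, ∃ s : Finset ℕ,
          ↑s ⊆ N j \ {n} ∧ ε < ∑ m ∈ s, d n m := fun j => hwit (N j) (hNinf j)
      choose nf hnfmem sf hsf hεf using hchoose
      have hnf_inj : Function.Injective nf := by
        intro j j' h
        by_contra hjj
        exact hNdisj j j' hjj (nf j) (hnfmem j) (h ▸ hnfmem j')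
      set M' : Set ℕ := Set.range nf with hM'
      have hM'M : M' ⊆ M := by rintro x ⟨j, rfl⟩; exact hNM j (hnfmem j)
      set t' : ℕ → Finset ℕ := fun n =>
        if h : ∃ j, nf j = n then t n ∪ sf h.choose else t n with ht'
      refine ⟨M', t', Set.infinite_range_of_injective hnf_inj, ?_⟩
      rintro n ⟨j, rfl⟩
      have hex : ∃ j', nf j' = nf j := ⟨j, rfl⟩
      set j₀ : ℕ := hex.choose with hj₀
      have hj₀eq : nf j₀ = nf j := hex.choose_spec
      have ht'n : t' (nf j) = t (nf j) ∪ sf j₀ := by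
        rw [ht']
        simp only [dif_pos hex]
        rfl
      -- sf j₀ ⊆ N j₀ \ {nf j}
      have hsfj : ↑(sf j₀) ⊆ N j₀ \ {nf j} := by
        rw [← hj₀eq]
        exact hsf j₀
      have hsfM : ↑(sf j₀) ⊆ M \ {nf j} := by
        refine hsfj.trans ?_
        exact Set.diff_subset_diff_left (hNM j₀)
      have hold := hinv (nf j) (hM'M ⟨j, rfl⟩)
      have hdisjt : Disjoint (t (nf j)) (sf j₀) := by
        rw [Finset.disjoint_left]
        intro a ha hasf
        have : a ∈ (↑(t (nf j)) : Set ℕ) ∩ (M \ {nf j}) := ⟨ha, hsfM hasf⟩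
        rw [hold.2] at this
        exact this
      constructor
      · rw [ht'n, Finset.sum_union hdisjt]
        push_cast
        have h1 := hold.1
        have h2 : ε < ∑ m ∈ sf j₀, d (nf j) m := by
          have := hεf j₀
          rwa [hj₀eq] at this
        linarith
      · rw [ht'n]
        apply Set.eq_empty_iff_forall_notMem.2
        rintro a ⟨hat, haM', hane⟩
        rw [Finset.coe_union, Set.mem_union] at hat
        obtain ⟨j', rfl⟩ := (haM' : ∃ j', nf j' = a)
        rcases hat with ha | ha
        · have : nf j' ∈ (↑(t (nf j)) : Set ℕ) ∩ (M \ {nf j}) :=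
            ⟨ha, hM'M ⟨j', rfl⟩, hane⟩
          rw [hold.2] at this
          exact this
        · have h1 : nf j' ∈ N j₀ \ {nf j} := hsfj ha
          have hj' : j' ≠ j₀ := by
            intro hcontra
            exact hane (by rw [hcontra, hj₀eq]; exact rfl)
          exact hNdisj j' j₀ hj' (nf j') (hnfmem j') h1.1
  -- conclude
  obtain ⟨k, hk⟩ := exists_nat_gt (K / ε)
  obtain ⟨M, t, hMinf, hinv⟩ := main k
  obtain ⟨n, hn⟩ := hMinf.nonempty
  have h1 := (hinv n hn).1
  have h2 := hK n (t n)
  have : K < (k:ℝ) * ε := by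
    rw [div_lt_iff₀ hε] at hk
    linarith
  linarith


variable {μ : Measure Ω} {F : Ω → X}

lemma ext_dual {a b : X} (h : ∀ x' : StrongDual ℝ X, x' a = x' b) : a = b :=
  (NormedSpace.eq_iff_forall_dual_eq ℝ).2 h

lemma pettis_spec {A : Set Ω} (h : ∃ x : X, IsPettisIntegralOn μ F A x) :
    IsPettisIntegralOn μ F A (pettisIntegral μ F A) := by
  rw [pettisIntegral, dif_pos h]; exact h.choose_spec

lemma fms_measurable {B : Set Ω} (h : B ∈ finiteMeasureSets μ) : MeasurableSet B := h.1

lemma fms_subset {A B : Set Ω} (hA : MeasurableSet A) (hB : B ∈ finiteMeasureSets μ)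
    (hAB : A ⊆ B) : A ∈ finiteMeasureSets μ :=
  ⟨hA, lt_of_le_of_lt (measure_mono hAB) hB.2⟩

lemma fms_union {A B : Set Ω} (hA : A ∈ finiteMeasureSets μ) (hB : B ∈ finiteMeasureSets μ) :
    A ∪ B ∈ finiteMeasureSets μ :=
  ⟨hA.1.union hB.1, lt_of_le_of_lt (measure_union_le A B) (ENNReal.add_lt_top.2 ⟨hA.2, hB.2⟩)⟩

lemma fms_inter {A B : Set Ω} (hA : A ∈ finiteMeasureSets μ) (hB : MeasurableSet B) :
    A ∩ B ∈ finiteMeasureSets μ :=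
  fms_subset (hA.1.inter hB) hA Set.inter_subset_left

lemma fms_diff {A B : Set Ω} (hA : A ∈ finiteMeasureSets μ) (hB : MeasurableSet B) :
    A \ B ∈ finiteMeasureSets μ :=
  fms_subset (hA.1.diff hB) hA Set.diff_subset

lemma fms_empty : (∅ : Set Ω) ∈ finiteMeasureSets μ := by
  refine ⟨MeasurableSet.empty, ?_⟩; simp

/-- From local Pettis integrability: existence of the Pettis integral on finite measure
sets, and local integrability of the scalarized functions. -/
lemma loc_exists (hL : LocPettisIntegrable μ F) :
    ∀ B ∈ finiteMeasureSets μ, ∃ x : X, IsPettisIntegralOn μ F B x := by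
  intro B hB
  obtain ⟨x, hx⟩ := (hL.2 B hB).2 Set.univ MeasurableSet.univ
  refine ⟨x, fun x' => ?_⟩
  have := hx x'
  rw [Measure.restrict_univ] at this
  rw [this]
  have hcomp : (fun t => x' (B.indicator F t)) = B.indicator (fun t => x' (F t)) := by
    have := Set.indicator_comp_of_zero (s := B) (f := F) (g := fun v : X => x' v) (map_zero x')
    simpa [Function.comp_def] using this.symm
  rw [hcomp, integral_indicator hB.1]

lemma loc_integrableOn (hL : LocPettisIntegrable μ F) (x' : StrongDual ℝ X) :
    ∀ B ∈ finiteMeasureSets μ, IntegrableOn (fun t => x' (F t)) B μ := by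
  intro B hB
  have h := (hL.2 B hB).1.2 x'
  have hcomp : (fun t => x' (B.indicator F t)) = B.indicator (fun t => x' (F t)) := by
    have := Set.indicator_comp_of_zero (s := B) (f := F) (g := fun v : X => x' v) (map_zero x')
    simpa [Function.comp_def] using this.symm
  rw [hcomp] at h
  exact (integrable_indicator_iff hB.1).1 h

/-- value of ν on finite measure sets. -/
lemma nu_eq (hν : ∀ B ∈ finiteMeasureSets μ, ∃ x : X, IsPettisIntegralOn μ F B x)
    {B : Set Ω} (hB : B ∈ finiteMeasureSets μ) (x' : StrongDual ℝ X) :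
    x' (pettisIntegral μ F B) = ∫ t in B, x' (F t) ∂μ :=
  pettis_spec (hν B hB) x'

lemma nu_add (hν : ∀ B ∈ finiteMeasureSets μ, ∃ x : X, IsPettisIntegralOn μ F B x)
    (hint : ∀ (x' : StrongDual ℝ X), ∀ B ∈ finiteMeasureSets μ,
      IntegrableOn (fun t => x' (F t)) B μ)
    {A B : Set Ω} (hA : A ∈ finiteMeasureSets μ) (hB : B ∈ finiteMeasureSets μ)
    (hd : Disjoint A B) :
    pettisIntegral μ F (A ∪ B) = pettisIntegral μ F A + pettisIntegral μ F B := by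
  refine ext_dual fun x' => ?_
  rw [map_add, nu_eq hν (fms_union hA hB) x', nu_eq hν hA x', nu_eq hν hB x',
    setIntegral_union hd hB.1 (hint x' A hA) (hint x' B hB)]

/-- Banach–Steinhaus: weakly bounded subsets of X are norm bounded. -/
lemma bdd_of_weak_bdd (S : Set X) (h : ∀ x' : StrongDual ℝ X, ∃ r, ∀ v ∈ S, |x' v| ≤ r) :
    ∃ R, 0 ≤ R ∧ ∀ v ∈ S, ‖v‖ ≤ R := by
  have h' : ∀ x' : StrongDual ℝ X, ∃ C, ∀ v : S,
      ‖(NormedSpace.inclusionInDoubleDual ℝ X (v : X)) x'‖ ≤ C := by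
    intro x'
    obtain ⟨r, hr⟩ := h x'
    exact ⟨r, fun v => by simpa [NormedSpace.dual_def] using hr v v.2⟩
  obtain ⟨C', hC'⟩ := banach_steinhaus (g := fun v : S => NormedSpace.inclusionInDoubleDual ℝ X (v : X)) h'
  refine ⟨max C' 0, le_max_right _ _, fun v hv => ?_⟩
  have := hC' ⟨v, hv⟩
  have hnorm : ‖NormedSpace.inclusionInDoubleDual ℝ X v‖ = ‖v‖ :=
    (NormedSpace.inclusionInDoubleDualLi ℝ (E := X)).norm_map v
  rw [hnorm] at this
  exact le_trans this (le_max_left _ _)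



lemma abs_dual_le (x' : StrongDual ℝ X) (v : X) : |x' v| ≤ ‖x'‖ * ‖v‖ := by
  simpa [Real.norm_eq_abs] using x'.le_opNorm v

/-- Key variation bound on a finite measure set. -/
lemma setIntegral_abs_le
    (hν : ∀ B ∈ finiteMeasureSets μ, ∃ x : X, IsPettisIntegralOn μ F B x)
    (x' : StrongDual ℝ X) {g' : Ω → ℝ}
    (hg' : StronglyMeasurable g') (hae : (fun t => x' (F t)) =ᵐ[μ] g')
    {B : Set Ω} (hB : B ∈ finiteMeasureSets μ)
    (hint : IntegrableOn (fun t => x' (F t)) B μ) {b : ℝ}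
    (hb : ∀ B' ∈ finiteMeasureSets μ, B' ⊆ B → |x' (pettisIntegral μ F B')| ≤ b) :
    ∫ t in B, |x' (F t)| ∂μ ≤ 2 * b := by
  set P : Set Ω := {t | 0 ≤ g' t} with hPdef
  have hPm : MeasurableSet P := measurableSet_le measurable_const hg'.measurable
  have hBp : B ∩ P ∈ finiteMeasureSets μ := fms_inter hB hPm
  have hBn : B \ P ∈ finiteMeasureSets μ := fms_diff hB hPm
  have habs : IntegrableOn (fun t => |x' (F t)|) B μ := hint.abs
  have hdisj : Disjoint (B ∩ P) (B \ P) :=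
    Set.disjoint_sdiff_right.mono_left Set.inter_subset_right
  have hsplit : ∫ t in B, |x' (F t)| ∂μ
      = (∫ t in B ∩ P, |x' (F t)| ∂μ) + ∫ t in B \ P, |x' (F t)| ∂μ := by
    rw [← setIntegral_union hdisj hBn.1 (habs.mono_set Set.inter_subset_left)
      (habs.mono_set Set.diff_subset), Set.inter_union_diff]
  have e1 : ∫ t in B ∩ P, |x' (F t)| ∂μ = x' (pettisIntegral μ F (B ∩ P)) := by
    rw [nu_eq hν hBp x']
    refine setIntegral_congr_ae hBp.1 ?_
    filter_upwards [hae] with t ht hmem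
    have h0 : (0:ℝ) ≤ g' t := hmem.2
    rw [ht, abs_of_nonneg h0]
  have e2 : ∫ t in B \ P, |x' (F t)| ∂μ = -(x' (pettisIntegral μ F (B \ P))) := by
    rw [nu_eq hν hBn x', ← integral_neg]
    refine setIntegral_congr_ae hBn.1 ?_
    filter_upwards [hae] with t ht hmem
    have h0 : g' t < 0 := lt_of_not_ge hmem.2
    rw [ht, abs_of_neg h0]
  rw [hsplit, e1, e2]
  have b1 := hb _ hBp Set.inter_subset_left
  have b2 := hb _ hBn Set.diff_subset
  have := abs_le.1 b1
  have := abs_le.1 b2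
  linarith [abs_le.1 b1, abs_le.1 b2]


/-- Variation bound over an arbitrary measurable set, given global integrability. -/
lemma setIntegral_abs_le'
    (hν : ∀ B ∈ finiteMeasureSets μ, ∃ x : X, IsPettisIntegralOn μ F B x)
    (x' : StrongDual ℝ X) {E : Set Ω} (hE : MeasurableSet E)
    (hgint : Integrable (fun t => x' (F t)) μ) {b : ℝ} (hb0 : 0 ≤ b)
    (hb : ∀ B' ∈ finiteMeasureSets μ, B' ⊆ E → |x' (pettisIntegral μ F B')| ≤ b) :
    ∫ t in E, |x' (F t)| ∂μ ≤ 2 * b := by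
  set g' : Ω → ℝ := hgint.1.mk _ with hg'def
  have hg' : StronglyMeasurable g' := hgint.1.stronglyMeasurable_mk
  have hae : (fun t => x' (F t)) =ᵐ[μ] g' := hgint.1.ae_eq_mk
  have hg'int : Integrable g' μ := hgint.congr hae
  set s : ℕ → Set Ω := fun n => E ∩ {t | ((n:ℝ)+1)⁻¹ ≤ |g' t|} with hsdef
  have hsm : ∀ n, MeasurableSet (s n) :=
    fun n => hE.inter (measurableSet_le measurable_const hg'.measurable.abs)
  have hsfin : ∀ n, s n ∈ finiteMeasureSets μ := by
    intro n
    refine ⟨hsm n, lt_of_le_of_lt (measure_mono ?_) (hg'int.abs.measure_ge_lt_top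
      (ε := ((n:ℝ)+1)⁻¹) (by positivity))⟩
    exact fun t ht => ht.2
  have hmono : Monotone s := by
    intro n m hnm t ht
    have h2 : ((n:ℝ)+1)⁻¹ ≤ |g' t| := ht.2
    have h3 : ((m:ℝ)+1)⁻¹ ≤ ((n:ℝ)+1)⁻¹ := by
      apply inv_anti₀ (by positivity)
      exact_mod_cast by omega
    exact ⟨ht.1, le_trans h3 h2⟩
  have habs : Integrable (fun t => |x' (F t)|) μ := hgint.abs
  set S : Set Ω := {t | g' t ≠ 0} with hSdef
  have hSm : MeasurableSet S := (hg'.measurable (measurableSet_singleton 0)).compl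
  have hU : (⋃ n, s n) = E ∩ S := by
    apply Set.eq_of_subset_of_subset
    · refine Set.iUnion_subset fun n t ht => ⟨ht.1, fun h0 => ?_⟩
      have h2 : ((n:ℝ)+1)⁻¹ ≤ |g' t| := ht.2
      rw [h0, abs_zero] at h2
      exact absurd h2 (not_le.2 (by positivity))
    · rintro t ⟨htE, ht0⟩
      have hpos : 0 < |g' t| := abs_pos.2 ht0
      obtain ⟨n, hn⟩ := exists_nat_one_div_lt hpos
      exact Set.mem_iUnion.2 ⟨n, htE, by rw [one_div] at hn; exact le_of_lt hn⟩
  have htend := tendsto_setIntegral_of_monotone hsm hmono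
    (habs.integrableOn : IntegrableOn _ (⋃ n, s n) μ)
  have hzero : ∫ t in E ∩ Sᶜ, |x' (F t)| ∂μ = 0 := by
    have hzm : MeasurableSet (E ∩ Sᶜ) := hE.inter hSm.compl
    have : ∫ t in E ∩ Sᶜ, |x' (F t)| ∂μ = ∫ _ in E ∩ Sᶜ, (0:ℝ) ∂μ := by
      refine setIntegral_congr_ae hzm ?_
      filter_upwards [hae] with t ht hmem
      rw [ht, show g' t = 0 from not_not.1 hmem.2, abs_zero]
    rw [this, integral_zero]
  have hEeq : ∫ t in E, |x' (F t)| ∂μ = ∫ t in ⋃ n, s n, |x' (F t)| ∂μ := by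
    rw [hU]
    conv_lhs => rw [← Set.inter_union_compl E S]
    rw [setIntegral_union
      ((disjoint_compl_right (a := S)).mono Set.inter_subset_right Set.inter_subset_right)
      (hE.inter hSm.compl) habs.integrableOn habs.integrableOn, hzero, add_zero]
  rw [hEeq]
  refine le_of_tendsto htend (Eventually.of_forall fun n => ?_)
  exact setIntegral_abs_le hν x' hg' hae (hsfin n) hgint.integrableOn
    (fun B' hB' hsub => hb B' hB' (hsub.trans Set.inter_subset_left))


lemma semifinite_unbounded (hsf : SemiFinite μ) {A : Set Ω} (hA : MeasurableSet A)
    (hinf : μ A = ∞) {c : ℝ≥0∞} (hc : c < ∞) :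
    ∃ B, B ⊆ A ∧ MeasurableSet B ∧ c < μ B ∧ μ B < ∞ := by
  set fam : Set Ω → Prop := fun B => B ⊆ A ∧ MeasurableSet B ∧ μ B < ∞ with hfam
  set s : ℝ≥0∞ := ⨆ (B : Set Ω) (_ : fam B), μ B with hs
  have hmem_le : ∀ B, fam B → μ B ≤ s := by
    intro B hB
    calc μ B ≤ ⨆ (_ : fam B), μ B := le_iSup (fun _ => μ B) hB
    _ ≤ s := le_iSup (fun B => ⨆ (_ : fam B), μ B) B
  rcases eq_or_lt_of_le (le_top : s ≤ ∞) with hstop | hslt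
  · have hlt : c < s := by rw [hstop]; exact hc
    rw [hs, lt_iSup_iff] at hlt
    obtain ⟨B, hB⟩ := hlt
    rw [lt_iSup_iff] at hB
    obtain ⟨hfB, hcB⟩ := hB
    exact ⟨B, hfB.1, hfB.2.1, hcB, hfB.2.2⟩
  · exfalso
    have hs0 : 0 < s := by
      obtain ⟨B, hBA, hBm, hB0, hBfin⟩ := hsf A hA (by rw [hinf]; exact ENNReal.zero_lt_top)
      exact lt_of_lt_of_le hB0 (hmem_le B ⟨hBA, hBm, hBfin⟩)
    have hch : ∀ n : ℕ, ∃ B, fam B ∧ s - ((n:ℝ≥0∞)+1)⁻¹ < μ B := by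
      intro n
      have hlt : s - ((n:ℝ≥0∞)+1)⁻¹ < s :=
        ENNReal.sub_lt_self hslt.ne hs0.ne' (by simp)
      rw [hs, lt_iSup_iff] at hlt
      obtain ⟨B, hB⟩ := hlt
      rw [lt_iSup_iff] at hB
      exact ⟨B, hB.1, hB.2⟩
    choose B hBfam hBgt using hch
    set C : ℕ → Set Ω := fun n => ⋃ i ∈ Finset.range (n+1), B i with hC
    have hCfam : ∀ n, fam (C n) := by
      intro n
      refine ⟨Set.iUnion₂_subset fun i _ => (hBfam i).1,
        MeasurableSet.biUnion (Finset.range (n+1)).countable_toSet (fun i _ => (hBfam i).2.1), ?_⟩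
      calc μ (C n) ≤ ∑ i ∈ Finset.range (n+1), μ (B i) := measure_biUnion_finset_le _ _
      _ < ∞ := ENNReal.sum_lt_top.2 fun i _ => (hBfam i).2.2
    have hCmono : Monotone C := by
      intro n m hnm
      apply Set.biUnion_subset_biUnion_left
      intro i hi
      have hi' : i < n + 1 := Finset.mem_range.1 hi
      exact Finset.mem_range.2 (by omega)
    have hCdir : Directed (· ⊆ ·) C := hCmono.directed_le
    set U : Set Ω := ⋃ n, C n with hU
    have hUs : μ U ≤ s := by
      rw [hU, hCdir.measure_iUnion]
      exact iSup_le fun n => hmem_le _ (hCfam n)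
    have hUm : MeasurableSet U := MeasurableSet.iUnion fun n => (hCfam n).2.1
    have hAU : 0 < μ (A \ U) := by
      by_contra h
      push_neg at h
      have h0 : μ (A \ U) = 0 := le_antisymm h (zero_le)
      have hcover : A ⊆ U ∪ (A \ U) := by
        intro t ht
        by_cases htU : t ∈ U
        · exact Or.inl htU
        · exact Or.inr ⟨ht, htU⟩
      have : μ A ≤ μ U + μ (A \ U) := (measure_mono hcover).trans (measure_union_le _ _)
      rw [h0, add_zero, hinf] at this
      exact hslt.ne (le_antisymm le_top (this.trans hUs))
    obtain ⟨D, hDA, hDm, hD0, hDfin⟩ := hsf (A \ U) (hA.diff hUm) hAU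
    obtain ⟨n, hn⟩ := ENNReal.exists_inv_nat_lt hD0.ne'
    have hn' : ((n:ℝ≥0∞)+1)⁻¹ < μ D :=
      lt_of_le_of_lt (ENNReal.inv_le_inv.2 le_self_add) hn
    have hBU : B n ⊆ U := by
      intro t ht
      exact Set.mem_iUnion.2 ⟨n, Set.mem_biUnion (Finset.self_mem_range_succ n) ht⟩
    have hdisj : Disjoint (B n) D :=
      Set.disjoint_left.2 fun t htB htD => (hDA htD).2 (hBU htB)
    have hfamBD : fam (B n ∪ D) :=
      ⟨Set.union_subset (hBfam n).1 (hDA.trans Set.diff_subset),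
        (hBfam n).2.1.union hDm,
        lt_of_le_of_lt (measure_union_le _ _) (ENNReal.add_lt_top.2 ⟨(hBfam n).2.2, hDfin⟩)⟩
    have hgt : s < μ (B n ∪ D) := by
      rw [measure_union hdisj hDm]
      calc s ≤ (s - ((n:ℝ≥0∞)+1)⁻¹) + ((n:ℝ≥0∞)+1)⁻¹ := le_tsub_add
      _ < μ (B n) + μ D := ENNReal.add_lt_add (hBgt n) hn'
    exact absurd (hmem_le _ hfamBD) (not_le.2 hgt)


/-- Dunford integrability from a uniform bound on ν over `Σ^f`, on semifinite measures. -/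
lemma integrable_of_bdd (hsf : SemiFinite μ) (hw : WeaklyMeasurable μ F)
    (hν : ∀ B ∈ finiteMeasureSets μ, ∃ x : X, IsPettisIntegralOn μ F B x)
    (hloc : ∀ (x' : StrongDual ℝ X), ∀ B ∈ finiteMeasureSets μ,
      IntegrableOn (fun t => x' (F t)) B μ)
    {C : ℝ} (hC0 : 0 ≤ C) (hC : ∀ B ∈ finiteMeasureSets μ, ‖pettisIntegral μ F B‖ ≤ C)
    (x' : StrongDual ℝ X) : Integrable (fun t => x' (F t)) μ := by
  set g' : Ω → ℝ := (hw x').mk _ with hg'def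
  have hg' : StronglyMeasurable g' := (hw x').stronglyMeasurable_mk
  have hae : (fun t => x' (F t)) =ᵐ[μ] g' := (hw x').ae_eq_mk
  have hbound : ∀ B ∈ finiteMeasureSets μ, ∀ B' ∈ finiteMeasureSets μ, B' ⊆ B →
      |x' (pettisIntegral μ F B')| ≤ ‖x'‖ * C := by
    intro B hB B' hB' _
    exact (abs_dual_le x' _).trans
      (mul_le_mul_of_nonneg_left (hC B' hB') (norm_nonneg x'))
  set Om : ℕ → Set Ω := fun n => {t | ((n:ℝ)+1)⁻¹ ≤ |g' t|} with hOm
  have hOmm : ∀ n, MeasurableSet (Om n) :=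
    fun n => measurableSet_le measurable_const hg'.measurable.abs
  have hOmfin : ∀ n, μ (Om n) < ∞ := by
    intro n
    by_contra h
    push_neg at h
    have hinf : μ (Om n) = ∞ := le_antisymm le_top h
    obtain ⟨B, hBsub, hBm, hBgt, hBfin⟩ := semifinite_unbounded hsf (hOmm n) hinf
      (c := ENNReal.ofReal (((n:ℝ)+1) * (2 * (‖x'‖ * C)))) ofReal_lt_top
    have hBf : B ∈ finiteMeasureSets μ := ⟨hBm, hBfin⟩
    have hintB : IntegrableOn (fun t => x' (F t)) B μ := hloc x' B hBf
    have hub : ∫ t in B, |x' (F t)| ∂μ ≤ 2 * (‖x'‖ * C) :=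
      setIntegral_abs_le hν x' hg' hae hBf hintB
        (fun B' hB' hsub => hbound B hBf B' hB' hsub)
    have hlb : (μ B).toReal * ((n:ℝ)+1)⁻¹ ≤ ∫ t in B, |x' (F t)| ∂μ := by
      have h1 : ∫ t in B, |x' (F t)| ∂μ = ∫ t in B, |g' t| ∂μ := by
        refine setIntegral_congr_ae hBm ?_
        filter_upwards [hae] with t ht _
        rw [ht]
      rw [h1]
      have h2 : ∫ _ in B, ((n:ℝ)+1)⁻¹ ∂μ ≤ ∫ t in B, |g' t| ∂μ := by
        refine setIntegral_mono_on (integrableOn_const hBfin.ne)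
          ((hloc x' B hBf).congr_fun_ae hae.restrict).abs hBm ?_
        exact fun t ht => hBsub ht
      simpa [setIntegral_const, smul_eq_mul, measureReal_def] using h2
    -- contradiction: μ B too large
    have htoReal : ((n:ℝ)+1) * (2 * (‖x'‖ * C)) < (μ B).toReal := by
      have := ENNReal.toReal_lt_toReal (by simp) hBfin.ne |>.2 hBgt
      rwa [ENNReal.toReal_ofReal (by positivity)] at this
    have : (μ B).toReal ≤ ((n:ℝ)+1) * (2 * (‖x'‖ * C)) := by
      have hpos : (0:ℝ) < ((n:ℝ)+1)⁻¹ := by positivity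
      have := hlb.trans hub
      calc (μ B).toReal = ((μ B).toReal * ((n:ℝ)+1)⁻¹) * ((n:ℝ)+1) := by
            field_simp
      _ ≤ (2 * (‖x'‖ * C)) * ((n:ℝ)+1) := by
            apply mul_le_mul_of_nonneg_right this (by positivity)
      _ = ((n:ℝ)+1) * (2 * (‖x'‖ * C)) := by ring
    linarith
  -- now finish: HasFiniteIntegral
  refine ⟨hw x', ?_⟩
  rw [hasFiniteIntegral_congr hae]
  have key : ∫⁻ t, ENNReal.ofReal |g' t| ∂μ ≤ ENNReal.ofReal (2 * (‖x'‖ * C)) := by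
    have hmeas : ∀ n, Measurable fun t => (Om n).indicator (fun s => ENNReal.ofReal |g' s|) t :=
      fun n => (ENNReal.measurable_ofReal.comp hg'.measurable.abs).indicator (hOmm n)
    have hmono : Monotone fun n t => (Om n).indicator (fun s => ENNReal.ofReal |g' s|) t := by
      intro n m hnm t
      simp only
      by_cases ht : t ∈ Om n
      · have ht' : ((n:ℝ)+1)⁻¹ ≤ |g' t| := ht
        have htm : t ∈ Om m := by
          show ((m:ℝ)+1)⁻¹ ≤ |g' t|
          refine le_trans ?_ ht'
          exact inv_anti₀ (by positivity) (by exact_mod_cast by omega)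
        rw [Set.indicator_of_mem ht, Set.indicator_of_mem htm]
      · rw [Set.indicator_of_notMem ht]
        exact zero_le
    have hsup : ∀ t, (⨆ n, (Om n).indicator (fun s => ENNReal.ofReal |g' s|) t)
        = ENNReal.ofReal |g' t| := by
      intro t
      by_cases h0 : g' t = 0
      · simp only [h0, abs_zero, ENNReal.ofReal_zero]
        refine le_antisymm (iSup_le fun n => ?_) (zero_le)
        by_cases ht : t ∈ Om n
        · exact absurd ht (by simp [hOm, h0]; positivity)
        · rw [Set.indicator_of_notMem ht]
      · obtain ⟨n, hn⟩ := exists_nat_one_div_lt (abs_pos.2 h0)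
        refine le_antisymm (iSup_le fun m => Set.indicator_le_self' (fun _ _ => zero_le) t) ?_
        have ht : t ∈ Om n := by
          rw [one_div] at hn
          exact le_of_lt hn
        exact le_iSup_of_le n (by rw [Set.indicator_of_mem ht])
    have heq : ∫⁻ t, ENNReal.ofReal |g' t| ∂μ
        = ⨆ n, ∫⁻ t in Om n, ENNReal.ofReal |g' t| ∂μ := by
      have hfe : (fun t => ENNReal.ofReal |g' t|)
          = fun t => ⨆ n, (Om n).indicator (fun s => ENNReal.ofReal |g' s|) t :=
        funext fun t => (hsup t).symm
      calc ∫⁻ t, ENNReal.ofReal |g' t| ∂μ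
          = ⨆ n, ∫⁻ t, (Om n).indicator (fun s => ENNReal.ofReal |g' s|) t ∂μ := by
            conv_lhs => rw [hfe]
            exact lintegral_iSup hmeas hmono
      _ = ⨆ n, ∫⁻ t in Om n, ENNReal.ofReal |g' t| ∂μ := by
            refine iSup_congr fun n => ?_
            rw [lintegral_indicator (hOmm n)]
    rw [heq]
    refine iSup_le fun n => ?_
    have hOf : Om n ∈ finiteMeasureSets μ := ⟨hOmm n, hOmfin n⟩
    have hint : IntegrableOn g' (Om n) μ := (hloc x' _ hOf).congr_fun_ae hae.restrict
    have : ∫⁻ t in Om n, ENNReal.ofReal |g' t| ∂μ = ENNReal.ofReal (∫ t in Om n, |g' t| ∂μ) := by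
      rw [ofReal_integral_eq_lintegral_ofReal hint.abs (Eventually.of_forall fun t => abs_nonneg _)]
    rw [this]
    apply ENNReal.ofReal_le_ofReal
    have h1 : ∫ t in Om n, |g' t| ∂μ = ∫ t in Om n, |x' (F t)| ∂μ := by
      refine setIntegral_congr_ae (hOmm n) ?_
      filter_upwards [hae] with t ht _
      rw [ht]
    rw [h1]
    exact setIntegral_abs_le hν x' hg' hae hOf (hloc x' _ hOf)
      (fun B' hB' hsub => hbound _ hOf B' hB' hsub)
  have hfin : ∫⁻ t, ENNReal.ofReal |g' t| ∂μ < ∞ := lt_of_le_of_lt key ofReal_lt_top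
  rw [hasFiniteIntegral_iff_norm]
  simpa [Real.norm_eq_abs] using hfin


/-- Exhaustion from strong additivity. -/
lemma exhaustion (hSA : StronglyAdditive μ F) {A : Set Ω} (hA : MeasurableSet A)
    {ε : ℝ} (hε : 0 < ε) :
    ∃ Cs ∈ finiteMeasureSets μ, Cs ⊆ A ∧
      ∀ B ∈ finiteMeasureSets μ, B ⊆ A \ Cs → ‖pettisIntegral μ F B‖ ≤ ε := by
  by_contra hcon
  push_neg at hcon
  have hch : ∀ C : Set Ω, C ∈ finiteMeasureSets μ ∧ C ⊆ A →
      ∃ B, (B ∈ finiteMeasureSets μ ∧ B ⊆ A \ C) ∧ ε < ‖pettisIntegral μ F B‖ := by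
    intro C hC
    obtain ⟨B, hB1, hB2, hB3⟩ := hcon C hC.1 hC.2
    exact ⟨B, ⟨hB1, hB2⟩, hB3⟩
  classical
  let Φ : Set Ω → Set Ω := fun C =>
    if h : C ∈ finiteMeasureSets μ ∧ C ⊆ A then (hch C h).choose else ∅
  have hΦ : ∀ C, C ∈ finiteMeasureSets μ ∧ C ⊆ A →
      (Φ C ∈ finiteMeasureSets μ ∧ Φ C ⊆ A \ C) ∧ ε < ‖pettisIntegral μ F (Φ C)‖ := by
    intro C h
    simp only [Φ, dif_pos h]
    exact (hch C h).choose_spec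
  let u : ℕ → Set Ω := fun n => Nat.rec (∅ : Set Ω) (fun _ un => un ∪ Φ un) n
  have hu0 : u 0 = ∅ := rfl
  have huS : ∀ n, u (n+1) = u n ∪ Φ (u n) := fun n => rfl
  have huI : ∀ n, u n ∈ finiteMeasureSets μ ∧ u n ⊆ A := by
    intro n
    induction n with
    | zero => exact ⟨fms_empty, Set.empty_subset A⟩
    | succ n ih =>
      obtain ⟨⟨hf, hsub⟩, _⟩ := hΦ (u n) ih
      rw [huS n]
      exact ⟨fms_union ih.1 hf, Set.union_subset ih.2 (hsub.trans Set.diff_subset)⟩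
  set b : ℕ → Set Ω := fun n => Φ (u n) with hbdef
  have hbf : ∀ n, b n ∈ finiteMeasureSets μ := fun n => ((hΦ (u n) (huI n)).1).1
  have hbsub : ∀ n, b n ⊆ A \ u n := fun n => ((hΦ (u n) (huI n)).1).2
  have hbε : ∀ n, ε < ‖pettisIntegral μ F (b n)‖ := fun n => (hΦ (u n) (huI n)).2
  have humono : ∀ m n, m ≤ n → u m ⊆ u n := by
    intro m n hmn
    induction n with
    | zero => rw [Nat.le_zero.1 hmn]
    | succ n ih =>
      rcases Nat.lt_or_ge m (n+1) with h | h
      · exact (ih (by omega)).trans (by rw [huS n]; exact Set.subset_union_left)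
      · have : m = n + 1 := by omega
        rw [this]
  have hdisj : Pairwise (Function.onFun Disjoint b) := by
    have key : ∀ m n, m < n → Disjoint (b m) (b n) := by
      intro m n hmn
      have h1 : b m ⊆ u n := by
        have : b m ⊆ u (m+1) := by rw [huS m]; exact Set.subset_union_right
        exact this.trans (humono (m+1) n hmn)
      have h2 : b n ⊆ (u n)ᶜ := fun t ht => ((hbsub n) ht).2
      exact Set.disjoint_left.2 fun t htm htn => (h2 htn) (h1 htm)
    intro m n hmn
    rcases Nat.lt_or_ge m n with h | h
    · exact key m n h
    · exact (key n m (by omega)).symm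
  have := hSA b hbf hdisj
  rw [NormedAddCommGroup.tendsto_nhds_zero] at this
  obtain ⟨n, hn⟩ := (this ε hε).exists
  exact absurd hn (not_lt.2 (hbε n).le)

/-- Boundedness of ν from strong additivity. -/
lemma bdd_of_SA (hSA : StronglyAdditive μ F)
    (hν : ∀ B ∈ finiteMeasureSets μ, ∃ x : X, IsPettisIntegralOn μ F B x)
    (hloc : ∀ (x' : StrongDual ℝ X), ∀ B ∈ finiteMeasureSets μ,
      IntegrableOn (fun t => x' (F t)) B μ) :
    ∃ C, 0 ≤ C ∧ ∀ B ∈ finiteMeasureSets μ, ‖pettisIntegral μ F B‖ ≤ C := by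
  obtain ⟨C₁, hC₁f, -, hC₁⟩ := exhaustion hSA MeasurableSet.univ one_pos (F := F)
  set S : Set X := {v | ∃ B, (B ∈ finiteMeasureSets μ ∧ B ⊆ C₁) ∧ v = pettisIntegral μ F B}
    with hSdef
  have hweak : ∀ x' : StrongDual ℝ X, ∃ r, ∀ v ∈ S, |x' v| ≤ r := by
    intro x'
    refine ⟨∫ t in C₁, |x' (F t)| ∂μ, ?_⟩
    rintro v ⟨B, ⟨hBf, hBsub⟩, rfl⟩
    rw [nu_eq hν hBf x']
    calc |∫ t in B, x' (F t) ∂μ| ≤ ∫ t in B, |x' (F t)| ∂μ := by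
          simpa [Real.norm_eq_abs] using norm_integral_le_integral_norm (μ := μ.restrict B)
            (f := fun t => x' (F t))
    _ ≤ ∫ t in C₁, |x' (F t)| ∂μ := by
          refine setIntegral_mono_set (hloc x' C₁ hC₁f).abs
            (Eventually.of_forall fun t => abs_nonneg _) (HasSubset.Subset.eventuallyLE hBsub)
  obtain ⟨R, hR0, hR⟩ := bdd_of_weak_bdd S hweak
  refine ⟨R + 1, by linarith, ?_⟩
  intro B hBf
  have h1 : B ∩ C₁ ∈ finiteMeasureSets μ := fms_inter hBf hC₁f.1
  have h2 : B \ C₁ ∈ finiteMeasureSets μ := fms_diff hBf hC₁f.1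
  have hdisj : Disjoint (B ∩ C₁) (B \ C₁) :=
    Set.disjoint_sdiff_right.mono_left Set.inter_subset_right
  have hsplit : pettisIntegral μ F B
      = pettisIntegral μ F (B ∩ C₁) + pettisIntegral μ F (B \ C₁) := by
    rw [← nu_add hν hloc h1 h2 hdisj, Set.inter_union_diff]
  rw [hsplit]
  have ha : ‖pettisIntegral μ F (B ∩ C₁)‖ ≤ R :=
    hR _ ⟨B ∩ C₁, ⟨h1, Set.inter_subset_right⟩, rfl⟩
  have hb : ‖pettisIntegral μ F (B \ C₁)‖ ≤ 1 := by
    refine hC₁ _ h2 ?_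
    exact fun t ht => ⟨trivial, ht.2⟩
  calc ‖_ + _‖ ≤ ‖pettisIntegral μ F (B ∩ C₁)‖ + ‖pettisIntegral μ F (B \ C₁)‖ := norm_add_le _ _
  _ ≤ R + 1 := add_le_add ha hb

/-- Reverse direction: local Pettis integrability + strong additivity ⇒ Pettis. -/
lemma pettis_of_loc_SA (hld : LocallyDetermined μ) (hw : WeaklyMeasurable μ F)
    (hL : LocPettisIntegrable μ F) (hSA : StronglyAdditive μ F) :
    PettisIntegrable μ F := by
  have hν := loc_exists hL
  have hloc := loc_integrableOn hL
  obtain ⟨C, hC0, hC⟩ := bdd_of_SA hSA hν hloc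
  have hD : ∀ x' : StrongDual ℝ X, Integrable (fun t => x' (F t)) μ :=
    integrable_of_bdd hld.1 hw hν hloc hC0 hC
  refine ⟨⟨hw, hD⟩, ?_⟩
  intro A hA
  -- exhausting sequence
  have hch : ∀ k : ℕ, ∃ Cs, (Cs ∈ finiteMeasureSets μ ∧ Cs ⊆ A) ∧
      ∀ B ∈ finiteMeasureSets μ, B ⊆ A \ Cs → ‖pettisIntegral μ F B‖ ≤ 1/((k:ℝ)+1) := by
    intro k
    obtain ⟨Cs, h1, h2, h3⟩ := exhaustion hSA hA (by positivity : (0:ℝ) < 1/((k:ℝ)+1)) (F := F)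
    exact ⟨Cs, ⟨h1, h2⟩, h3⟩
  choose Cs hCs hCs' using hch
  set D : ℕ → Set Ω := fun k => ⋃ i ∈ Finset.range (k+1), Cs i with hDdef
  have hDf : ∀ k, D k ∈ finiteMeasureSets μ := by
    intro k
    have : D k ⊆ A := Set.iUnion₂_subset fun i _ => (hCs i).2
    refine ⟨MeasurableSet.biUnion (Finset.range (k+1)).countable_toSet
      (fun i _ => (hCs i).1.1), ?_⟩
    calc μ (D k) ≤ ∑ i ∈ Finset.range (k+1), μ (Cs i) := measure_biUnion_finset_le _ _
    _ < ∞ := ENNReal.sum_lt_top.2 fun i _ => (hCs i).1.2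
  have hDA : ∀ k, D k ⊆ A := fun k => Set.iUnion₂_subset fun i _ => (hCs i).2
  have hDmono : Monotone D := by
    intro m n hmn
    apply Set.biUnion_subset_biUnion_left
    intro i hi
    exact Finset.mem_range.2 (by have := Finset.mem_range.1 hi; omega)
  have hCsD : ∀ k, Cs k ⊆ D k :=
    fun k => Set.subset_biUnion_of_mem (Finset.self_mem_range_succ k)
  have hsmall : ∀ k, ∀ B ∈ finiteMeasureSets μ, B ⊆ A \ D k →
      ‖pettisIntegral μ F B‖ ≤ 1/((k:ℝ)+1) := by
    intro k B hBf hBsub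
    refine hCs' k B hBf (hBsub.trans ?_)
    exact Set.diff_subset_diff_right (hCsD k)
  set y : ℕ → X := fun k => pettisIntegral μ F (D k) with hydef
  have hdiff : ∀ k m, k ≤ m → ‖y m - y k‖ ≤ 1/((k:ℝ)+1) := by
    intro k m hkm
    have h2 : D m \ D k ∈ finiteMeasureSets μ := fms_diff (hDf m) (hDf k).1
    have hsplit : y m = y k + pettisIntegral μ F (D m \ D k) := by
      rw [hydef]
      simp only
      rw [← nu_add hν hloc (hDf k) h2
        Set.disjoint_sdiff_right, Set.union_diff_cancel (hDmono hkm)]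
    rw [hsplit]
    simp only [add_sub_cancel_left]
    refine hsmall k _ h2 ?_
    exact fun t ht => ⟨hDA m ht.1, ht.2⟩
  have hcauchy : CauchySeq y := by
    refine cauchySeq_of_le_tendsto_0 (fun N => 2/((N:ℝ)+1)) ?_ ?_
    · intro n m N hn hm
      have h1 := hdiff N n hn
      have h2 := hdiff N m hm
      calc dist (y n) (y m) ≤ dist (y n) (y N) + dist (y m) (y N) := dist_triangle_right _ _ _
      _ ≤ 1/((N:ℝ)+1) + 1/((N:ℝ)+1) := by
            rw [dist_eq_norm, dist_eq_norm]
            exact add_le_add h1 h2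
      _ = 2/((N:ℝ)+1) := by ring
    · have h := tendsto_one_div_add_atTop_nhds_zero_nat (𝕜 := ℝ)
      have : Tendsto (fun N : ℕ => 2 * (1/((N:ℝ)+1))) atTop (nhds (2 * 0)) := h.const_mul 2
      simpa [div_eq_mul_inv] using this
  obtain ⟨x, hx⟩ := cauchySeq_tendsto_of_complete hcauchy
  refine ⟨x, fun x' => ?_⟩
  -- x' x = ∫_A g
  have hlim1 : Tendsto (fun k => x' (y k)) atTop (nhds (x' x)) :=
    (x'.continuous.tendsto x).comp hx
  have heval : ∀ k, x' (y k) = ∫ t in D k, x' (F t) ∂μ := fun k => nu_eq hν (hDf k) x'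
  have hlim2 : Tendsto (fun k => x' (y k)) atTop (nhds (∫ t in A, x' (F t) ∂μ)) := by
    rw [tendsto_iff_norm_sub_tendsto_zero]
    have hbnd : ∀ k, ‖x' (y k) - ∫ t in A, x' (F t) ∂μ‖ ≤ 2 * (‖x'‖ * (1/((k:ℝ)+1))) := by
      intro k
      rw [heval k]
      have hAD : MeasurableSet (A \ D k) := hA.diff (hDf k).1
      have hsplitI : ∫ t in A, x' (F t) ∂μ
          = (∫ t in D k, x' (F t) ∂μ) + ∫ t in A \ D k, x' (F t) ∂μ := by
        rw [← setIntegral_union Set.disjoint_sdiff_right hAD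
          (hD x').integrableOn (hD x').integrableOn, Set.union_diff_cancel (hDA k)]
      have habs : |∫ t in A \ D k, x' (F t) ∂μ| ≤ 2 * (‖x'‖ * (1/((k:ℝ)+1))) := by
        have h1 : |∫ t in A \ D k, x' (F t) ∂μ| ≤ ∫ t in A \ D k, |x' (F t)| ∂μ := by
          simpa [Real.norm_eq_abs] using norm_integral_le_integral_norm
            (μ := μ.restrict (A \ D k)) (f := fun t => x' (F t))
        refine h1.trans ?_
        refine setIntegral_abs_le' hν x' hAD (hD x') (by positivity) ?_
        intro B' hB' hsub
        calc |x' (pettisIntegral μ F B')| ≤ ‖x'‖ * ‖pettisIntegral μ F B'‖ := abs_dual_le x' _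
        _ ≤ ‖x'‖ * (1/((k:ℝ)+1)) :=
              mul_le_mul_of_nonneg_left (hsmall k B' hB' hsub) (norm_nonneg x')
      rw [hsplitI]
      simpa [Real.norm_eq_abs, abs_sub_comm] using habs
    have htend0 : Tendsto (fun k : ℕ => 2 * (‖x'‖ * (1/((k:ℝ)+1)))) atTop (nhds 0) := by
      have h := tendsto_one_div_add_atTop_nhds_zero_nat (𝕜 := ℝ)
      have : Tendsto (fun k : ℕ => 2 * (‖x'‖ * (1/((k:ℝ)+1)))) atTop (nhds (2 * (‖x'‖ * 0))) :=
        (h.const_mul ‖x'‖).const_mul 2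
      simpa using this
    exact squeeze_zero (fun k => norm_nonneg _) hbnd htend0
  exact tendsto_nhds_unique hlim1 hlim2


/-- Pettis integrable functions have strongly additive indefinite integrals
(Orlicz–Pettis style argument). -/
lemma SA_of_pettis (hP : PettisIntegrable μ F) : StronglyAdditive μ F := by
  intro B hBf hBdisj
  by_contra hT
  rw [NormedAddCommGroup.tendsto_nhds_zero] at hT
  push_neg at hT
  obtain ⟨ε, hε, hfreq⟩ := hT
  have hinf : {n | ε ≤ ‖pettisIntegral μ F (B n)‖}.Infinite :=
    Nat.frequently_atTop_iff_infinite.1 hfreq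
  set p : ℕ → Prop := fun n => ε ≤ ‖pettisIntegral μ F (B n)‖ with hp
  have hpinf : (setOf p).Infinite := hinf
  have hval : ∀ A : Set Ω, MeasurableSet A →
      ∀ x' : StrongDual ℝ X, x' (pettisIntegral μ F A) = ∫ t in A, x' (F t) ∂μ :=
    fun A hA => pettis_spec (hP.2 A hA)
  have hgint : ∀ x' : StrongDual ℝ X, Integrable (fun t => x' (F t)) μ := hP.1.2
  -- subsequence
  set e : ℕ → ℕ := Nat.nth p with he
  have heinj : Function.Injective e := Nat.nth_injective hpinf
  set D : ℕ → Set Ω := fun k => B (e k) with hD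
  have hDm : ∀ k, MeasurableSet (D k) := fun k => (hBf (e k)).1
  have hDdisj : Pairwise (Function.onFun Disjoint D) :=
    fun i j hij => hBdisj (fun h => hij (heinj h))
  have hDε : ∀ k, ε ≤ ‖pettisIntegral μ F (D k)‖ := fun k => Nat.nth_mem_of_infinite hpinf k
  have hDne : ∀ k, pettisIntegral μ F (D k) ≠ 0 := by
    intro k h0
    have hk := hDε k
    rw [h0] at hk
    simp at hk
    linarith
  have hy : ∀ k, ∃ y : StrongDual ℝ X, ‖y‖ = 1 ∧
      y (pettisIntegral μ F (D k)) = ‖pettisIntegral μ F (D k)‖ := by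
    intro k
    obtain ⟨g, hg1, hg2⟩ := exists_dual_vector ℝ _ (norm_ne_zero_iff.2 (hDne k))
    exact ⟨g, hg1, by exact_mod_cast hg2⟩
  choose y hy1 hy2 using hy
  -- bound on partial unions
  set UT : Set ℕ → Set Ω := fun T => ⋃ j ∈ T, D j with hUT
  have hUTm : ∀ T, MeasurableSet (UT T) := by
    intro T
    exact MeasurableSet.biUnion (Set.to_countable T) (fun j _ => hDm j)
  obtain ⟨R, hR0, hR⟩ := bdd_of_weak_bdd
    {v | ∃ T : Set ℕ, v = pettisIntegral μ F (UT T)} (by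
      intro x'
      refine ⟨∫ t, |x' (F t)| ∂μ, ?_⟩
      rintro v ⟨T, rfl⟩
      rw [hval _ (hUTm T) x']
      calc |∫ t in UT T, x' (F t) ∂μ| ≤ ∫ t in UT T, |x' (F t)| ∂μ := by
            simpa [Real.norm_eq_abs] using norm_integral_le_integral_norm
              (μ := μ.restrict (UT T)) (f := fun t => x' (F t))
      _ ≤ ∫ t, |x' (F t)| ∂μ :=
            setIntegral_le_integral (hgint x').abs
              (Eventually.of_forall fun t => abs_nonneg _))
  -- finite additivity over finsets
  have hfinadd : ∀ (x' : StrongDual ℝ X) (s : Finset ℕ),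
      x' (pettisIntegral μ F (UT ↑s)) = ∑ j ∈ s, x' (pettisIntegral μ F (D j)) := by
    intro x' s
    rw [hval _ (hUTm ↑s) x']
    have : UT (↑s : Set ℕ) = ⋃ j ∈ s, D j := by
      rw [hUT]
      simp
    rw [this, integral_biUnion_finset s (fun j _ => hDm j)
      (fun i _ j _ hij => hDdisj hij) (fun j _ => (hgint x').integrableOn)]
    exact Finset.sum_congr rfl fun j _ => (hval _ (hDm j) x').symm
  -- uniform row bound
  have hrowbdd : ∀ (x' : StrongDual ℝ X), ‖x'‖ ≤ 1 → ∀ (s : Finset ℕ),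
      ∑ j ∈ s, |x' (pettisIntegral μ F (D j))| ≤ 2 * R := by
    intro x' hx' s
    classical
    set sp := s.filter (fun j => 0 ≤ x' (pettisIntegral μ F (D j))) with hsp
    set sn := s.filter (fun j => ¬ 0 ≤ x' (pettisIntegral μ F (D j))) with hsn
    have hsplit : ∑ j ∈ s, |x' (pettisIntegral μ F (D j))|
        = (∑ j ∈ sp, x' (pettisIntegral μ F (D j)))
          + ∑ j ∈ sn, -(x' (pettisIntegral μ F (D j))) := by
      rw [← Finset.sum_filter_add_sum_filter_not s (fun j => 0 ≤ x' (pettisIntegral μ F (D j)))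
        (fun j => |x' (pettisIntegral μ F (D j))|)]
      congr 1
      · exact Finset.sum_congr rfl fun j hj => abs_of_nonneg (Finset.mem_filter.1 hj).2
      · exact Finset.sum_congr rfl fun j hj =>
          abs_of_neg (lt_of_not_ge (Finset.mem_filter.1 hj).2)
    rw [hsplit]
    have h1 : ∑ j ∈ sp, x' (pettisIntegral μ F (D j)) ≤ R := by
      rw [← hfinadd x' sp]
      calc x' (pettisIntegral μ F (UT ↑sp)) ≤ |x' (pettisIntegral μ F (UT ↑sp))| := le_abs_self _
      _ ≤ ‖x'‖ * ‖pettisIntegral μ F (UT ↑sp)‖ := abs_dual_le x' _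
      _ ≤ 1 * R := mul_le_mul hx' (hR _ ⟨↑sp, rfl⟩) (norm_nonneg _) zero_le_one
      _ = R := one_mul R
    have h2 : ∑ j ∈ sn, -(x' (pettisIntegral μ F (D j))) ≤ R := by
      rw [Finset.sum_neg_distrib, ← hfinadd x' sn]
      calc -(x' (pettisIntegral μ F (UT ↑sn))) ≤ |x' (pettisIntegral μ F (UT ↑sn))| :=
            neg_le_abs _
      _ ≤ ‖x'‖ * ‖pettisIntegral μ F (UT ↑sn)‖ := abs_dual_le x' _
      _ ≤ 1 * R := mul_le_mul hx' (hR _ ⟨↑sn, rfl⟩) (norm_nonneg _) zero_le_one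
      _ = R := one_mul R
    linarith
  -- Rosenthal
  obtain ⟨M, hMinf, hMprop⟩ := rosenthal (fun k j => |y k (pettisIntegral μ F (D j))|)
    (fun k j => abs_nonneg _) (K := 2 * R)
    (fun k s => hrowbdd (y k) (le_of_eq (hy1 k)) s) (ε := ε/4) (by linarith)
  set q : ℕ → Prop := fun n => n ∈ M with hq
  have hqinf : (setOf q).Infinite := hMinf
  set e2 : ℕ → ℕ := Nat.nth q with he2
  have he2inj : Function.Injective e2 := Nat.nth_injective hqinf
  have he2mem : ∀ i, e2 i ∈ M := fun i => Nat.nth_mem_of_infinite hqinf i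
  set E : ℕ → Set Ω := fun i => D (e2 i) with hE
  set z : ℕ → StrongDual ℝ X := fun i => y (e2 i) with hz
  have hz1 : ∀ i, ‖z i‖ = 1 := fun i => hy1 (e2 i)
  have hzE : ∀ i, ε ≤ z i (pettisIntegral μ F (E i)) := by
    intro i
    rw [hz, hE]
    simp only
    rw [hy2 (e2 i)]
    exact hDε (e2 i)
  have hrow : ∀ i (s : Finset ℕ), (∀ j ∈ s, j ≠ i) →
      ∑ j ∈ s, |z i (pettisIntegral μ F (E j))| ≤ ε/4 := by
    intro i s hs
    have himg : ∑ j ∈ s, |z i (pettisIntegral μ F (E j))|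
        = ∑ m ∈ s.image e2, |y (e2 i) (pettisIntegral μ F (D m))| := by
      rw [Finset.sum_image (fun a _ b _ hab => he2inj hab)]
    rw [himg]
    refine hMprop (e2 i) (he2mem i) _ ?_
    intro m hm
    simp only [Finset.coe_image, Set.mem_image, Finset.mem_coe] at hm
    obtain ⟨j, hj, rfl⟩ := hm
    refine ⟨he2mem j, ?_⟩
    simp only [Set.mem_singleton_iff]
    intro hcontra
    exact hs j hj (he2inj hcontra)
  -- the union and its Pettis integral
  set U : Set Ω := ⋃ i, E i with hU
  have hUm : MeasurableSet U := MeasurableSet.iUnion fun i => hDm (e2 i)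
  set s0 : X := pettisIntegral μ F U with hs0
  have hEdisj : Pairwise (Function.onFun Disjoint E) :=
    fun i j hij => hDdisj (fun h => hij (he2inj h))
  have hsum : ∀ x' : StrongDual ℝ X,
      HasSum (fun i => x' (pettisIntegral μ F (E i))) (x' s0) := by
    intro x'
    have h := hasSum_integral_iUnion (fun i => hDm (e2 i)) hEdisj
      ((hgint x').integrableOn : IntegrableOn _ (⋃ i, E i) μ)
    have h1 : ∀ i, ∫ t in E i, x' (F t) ∂μ = x' (pettisIntegral μ F (E i)) :=
      fun i => (hval _ (hDm (e2 i)) x').symm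
    have h2 : x' s0 = ∫ t in ⋃ i, E i, x' (F t) ∂μ := hval _ hUm x'
    rw [hs0, h2]
    exact HasSum.congr_fun h (fun i => (h1 i).symm) |>.congr_fun (fun i => rfl)
  set SS : ℕ → X := fun k => ∑ i ∈ Finset.range k, pettisIntegral μ F (E i) with hSS
  have hSStend : ∀ x' : StrongDual ℝ X,
      Tendsto (fun k => x' (SS k)) atTop (nhds (x' s0)) := by
    intro x'
    have := (hsum x').tendsto_sum_nat
    convert this using 2 with k
    rw [hSS]
    simp only
    rw [map_sum]
  -- Mazur: s0 in closure of convex hull of the SS k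
  have hmazur : s0 ∈ closure (convexHull ℝ (Set.range SS)) := by
    by_contra hcon
    obtain ⟨f, u, hfu, hus⟩ := geometric_hahn_banach_closed_point
      ((convex_convexHull ℝ _).closure) isClosed_closure hcon
    have hlt : ∀ k, f (SS k) < u :=
      fun k => hfu _ (subset_closure (subset_convexHull ℝ _ (Set.mem_range_self k)))
    have : f s0 ≤ u := le_of_tendsto (hSStend f) (Eventually.of_forall fun k => (hlt k).le)
    linarith
  obtain ⟨v, hvmem, hvdist⟩ := Metric.mem_closure_iff.1 hmazur (ε/4) (by linarith)
  rw [convexHull_eq] at hvmem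
  obtain ⟨ι, tset, w, zfun, hw0, hw1, hzmem, hcm⟩ := hvmem
  have hkk : ∀ i ∈ tset, ∃ k, SS k = zfun i := fun i hi => hzmem i hi
  classical
  set kk : ι → ℕ := fun i => if h : ∃ k, SS k = zfun i then h.choose else 0 with hkk'
  have hkkeq : ∀ i ∈ tset, SS (kk i) = zfun i := by
    intro i hi
    rw [hkk']
    simp only [dif_pos (hkk i hi)]
    exact (hkk i hi).choose_spec
  set n : ℕ := tset.sup kk with hn
  have hkkle : ∀ i ∈ tset, kk i ≤ n := fun i hi => Finset.le_sup hi
  -- estimates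
  have hSSest : ∀ k, k ≤ n → |z n (SS k)| ≤ ε/4 := by
    intro k hk
    rw [hSS]
    simp only
    rw [map_sum]
    calc |∑ i ∈ Finset.range k, z n (pettisIntegral μ F (E i))|
        ≤ ∑ i ∈ Finset.range k, |z n (pettisIntegral μ F (E i))| :=
          Finset.abs_sum_le_sum_abs _ _
    _ ≤ ε/4 := hrow n _ (fun j hj => by
          have := Finset.mem_range.1 hj
          omega)
  have hvest : |z n v| ≤ ε/4 := by
    rw [← hcm, Finset.centerMass_eq_of_sum_1 _ _ hw1, map_sum]
    calc |∑ i ∈ tset, z n (w i • zfun i)| ≤ ∑ i ∈ tset, |z n (w i • zfun i)| :=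
          Finset.abs_sum_le_sum_abs _ _
    _ ≤ ∑ i ∈ tset, w i * (ε/4) := by
          refine Finset.sum_le_sum fun i hi => ?_
          rw [ContinuousLinearMap.map_smul, smul_eq_mul, abs_mul, abs_of_nonneg (hw0 i hi)]
          refine mul_le_mul_of_nonneg_left ?_ (hw0 i hi)
          rw [← hkkeq i hi]
          exact hSSest (kk i) (hkkle i hi)
    _ = ε/4 := by rw [← Finset.sum_mul, hw1, one_mul]
  -- z n s0 is large
  have hs0large : ε - ε/4 ≤ z n s0 := by
    have h := hsum (z n)
    set f' : ℕ → ℝ := fun i => if i = n then 0 else z n (pettisIntegral μ F (E i)) with hf'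
    have hf'sum : HasSum f' (z n s0 - z n (pettisIntegral μ F (E n))) := by
      have h2 := h.sub (hasSum_ite_eq n (z n (pettisIntegral μ F (E n))))
      refine h2.congr_fun fun i => ?_
      rw [hf']
      by_cases hi : i = n <;> simp [hi]
    have habs_sum : ∀ m : ℕ, ∑ i ∈ Finset.range m, |f' i| ≤ ε/4 := by
      intro m
      have : ∑ i ∈ Finset.range m, |f' i|
          = ∑ i ∈ (Finset.range m).erase n, |z n (pettisIntegral μ F (E i))| := by
        rw [← Finset.sum_erase (Finset.range m) (f := fun i => |f' i|) (a := n) (by simp [hf'])]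
        refine Finset.sum_congr rfl fun i hi => ?_
        simp [hf', Finset.ne_of_mem_erase hi]
      rw [this]
      exact hrow n _ (fun j hj => Finset.ne_of_mem_erase hj)
    have hsummable : Summable fun i => |f' i| :=
      summable_of_sum_range_le (fun i => abs_nonneg _) habs_sum
    have htsum_le : ∑' i, |f' i| ≤ ε/4 := Summable.tsum_le_of_sum_range_le hsummable habs_sum
    have hbound : |z n s0 - z n (pettisIntegral μ F (E n))| ≤ ε/4 := by
      rw [← hf'sum.tsum_eq]
      have hnorm := norm_tsum_le_tsum_norm (f := f')
        (by simpa [Real.norm_eq_abs] using hsummable)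
      calc |∑' i, f' i| ≤ ∑' i, |f' i| := by
            simpa [Real.norm_eq_abs] using hnorm
      _ ≤ ε/4 := htsum_le
    have h1 := abs_le.1 hbound
    have h2 := hzE n
    linarith
  -- final contradiction
  have hfin : |z n s0 - z n v| ≤ ε/4 := by
    calc |z n s0 - z n v| = |z n (s0 - v)| := by rw [map_sub]
    _ ≤ ‖z n‖ * ‖s0 - v‖ := abs_dual_le _ _
    _ = ‖s0 - v‖ := by rw [hz1 n, one_mul]
    _ ≤ ε/4 := by
          rw [← dist_eq_norm]
          exact hvdist.le
  have h1 := abs_le.1 hvest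
  have h2 := abs_le.1 hfin
  linarith


/-- Pettis integrability implies local Pettis integrability. -/
lemma loc_of_pettis (hP : PettisIntegrable μ F) : LocPettisIntegrable μ F := by
  refine ⟨hP.1.1, fun B hB => ?_⟩
  have hcomp : ∀ x' : StrongDual ℝ X,
      (fun t => x' (B.indicator F t)) = B.indicator (fun t => x' (F t)) := by
    intro x'
    have := Set.indicator_comp_of_zero (s := B) (f := F) (g := fun v : X => x' v) (map_zero x')
    simpa [Function.comp_def] using this.symm
  refine ⟨⟨fun x' => ?_, fun x' => ?_⟩, fun A hA => ?_⟩
  · rw [hcomp x']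
    exact (hP.1.1 x').indicator hB.1
  · rw [hcomp x']
    exact (hP.1.2 x').indicator hB.1
  · obtain ⟨x, hx⟩ := hP.2 (B ∩ A) (hB.1.inter hA)
    refine ⟨x, fun x' => ?_⟩
    rw [hx x', hcomp x', integral_indicator hB.1 (μ := μ.restrict A),
      Measure.restrict_restrict hB.1]

/-- Diestel–Faires: if `X` contains no copy of `c₀` and `ν_F` is bounded, then `ν_F`
is strongly additive. -/
lemma SA_of_noc0
    (hnoc0 : ¬∃ T : ZeroAtInftyContinuousMap ℕ ℝ →L[ℝ] X,
        ∃ c : ℝ, 0 < c ∧ ∀ y, c * ‖y‖ ≤ ‖T y‖)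
    {C : ℝ} (hC : ∀ B ∈ finiteMeasureSets μ, ‖pettisIntegral μ F B‖ ≤ C)
    (hL : LocPettisIntegrable μ F) : StronglyAdditive μ F := by
  have hν := loc_exists hL
  have hint := loc_integrableOn hL
  set C' : ℝ := max C 0 with hC'
  have hC'0 : 0 ≤ C' := le_max_right _ _
  have hCb : ∀ B ∈ finiteMeasureSets μ, ‖pettisIntegral μ F B‖ ≤ C' :=
    fun B hB => (hC B hB).trans (le_max_left _ _)
  intro B hBf hBdisj
  by_contra hT
  rw [NormedAddCommGroup.tendsto_nhds_zero] at hT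
  push_neg at hT
  obtain ⟨ε, hε, hfreq⟩ := hT
  set p : ℕ → Prop := fun n => ε ≤ ‖pettisIntegral μ F (B n)‖ with hp
  have hpinf : (setOf p).Infinite := Nat.frequently_atTop_iff_infinite.1 hfreq
  set e : ℕ → ℕ := Nat.nth p with he
  have heinj : Function.Injective e := Nat.nth_injective hpinf
  set D : ℕ → Set Ω := fun k => B (e k) with hD
  have hDf : ∀ k, D k ∈ finiteMeasureSets μ := fun k => hBf (e k)
  have hDdisj : Pairwise (Function.onFun Disjoint D) :=
    fun i j hij => hBdisj (fun h => hij (heinj h))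
  have hDε : ∀ k, ε ≤ ‖pettisIntegral μ F (D k)‖ := fun k => Nat.nth_mem_of_infinite hpinf k
  have hDne : ∀ k, pettisIntegral μ F (D k) ≠ 0 := by
    intro k h0
    have hk := hDε k
    rw [h0] at hk
    simp at hk
    linarith
  have hy : ∀ k, ∃ y : StrongDual ℝ X, ‖y‖ = 1 ∧
      y (pettisIntegral μ F (D k)) = ‖pettisIntegral μ F (D k)‖ := by
    intro k
    obtain ⟨g, hg1, hg2⟩ := exists_dual_vector ℝ _ (norm_ne_zero_iff.2 (hDne k))
    exact ⟨g, hg1, by exact_mod_cast hg2⟩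
  choose y hy1 hy2 using hy
  -- finite unions are in Σ^f and ν is additive on them
  have hUfin : ∀ s : Finset ℕ, (⋃ j ∈ s, D j) ∈ finiteMeasureSets μ := by
    intro s
    refine ⟨MeasurableSet.biUnion s.countable_toSet (fun j _ => (hDf j).1), ?_⟩
    calc μ (⋃ j ∈ s, D j) ≤ ∑ j ∈ s, μ (D j) := measure_biUnion_finset_le _ _
    _ < ∞ := ENNReal.sum_lt_top.2 fun j _ => (hDf j).2
  have hfinadd : ∀ (x' : StrongDual ℝ X) (s : Finset ℕ),
      x' (pettisIntegral μ F (⋃ j ∈ s, D j)) = ∑ j ∈ s, x' (pettisIntegral μ F (D j)) := by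
    intro x' s
    rw [nu_eq hν (hUfin s) x', integral_biUnion_finset s (fun j _ => (hDf j).1)
      (fun i _ j _ hij => hDdisj hij) (fun j _ => hint x' _ (hDf j))]
    exact Finset.sum_congr rfl fun j _ => (nu_eq hν (hDf j) x').symm
  -- uniform row bound
  have hrowbdd : ∀ (x' : StrongDual ℝ X) (s : Finset ℕ),
      ∑ j ∈ s, |x' (pettisIntegral μ F (D j))| ≤ 2 * C' * ‖x'‖ := by
    intro x' s
    classical
    set sp := s.filter (fun j => 0 ≤ x' (pettisIntegral μ F (D j))) with hsp
    set sn := s.filter (fun j => ¬ 0 ≤ x' (pettisIntegral μ F (D j))) with hsn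
    have hsplit : ∑ j ∈ s, |x' (pettisIntegral μ F (D j))|
        = (∑ j ∈ sp, x' (pettisIntegral μ F (D j)))
          + ∑ j ∈ sn, -(x' (pettisIntegral μ F (D j))) := by
      rw [← Finset.sum_filter_add_sum_filter_not s (fun j => 0 ≤ x' (pettisIntegral μ F (D j)))
        (fun j => |x' (pettisIntegral μ F (D j))|)]
      congr 1
      · exact Finset.sum_congr rfl fun j hj => abs_of_nonneg (Finset.mem_filter.1 hj).2
      · exact Finset.sum_congr rfl fun j hj =>
          abs_of_neg (lt_of_not_ge (Finset.mem_filter.1 hj).2)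
    rw [hsplit]
    have h1 : ∑ j ∈ sp, x' (pettisIntegral μ F (D j)) ≤ C' * ‖x'‖ := by
      rw [← hfinadd x' sp]
      calc x' (pettisIntegral μ F (⋃ j ∈ sp, D j))
          ≤ |x' (pettisIntegral μ F (⋃ j ∈ sp, D j))| := le_abs_self _
      _ ≤ ‖x'‖ * ‖pettisIntegral μ F (⋃ j ∈ sp, D j)‖ := abs_dual_le x' _
      _ ≤ ‖x'‖ * C' := mul_le_mul_of_nonneg_left (hCb _ (hUfin sp)) (norm_nonneg _)
      _ = C' * ‖x'‖ := mul_comm _ _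
    have h2 : ∑ j ∈ sn, -(x' (pettisIntegral μ F (D j))) ≤ C' * ‖x'‖ := by
      rw [Finset.sum_neg_distrib, ← hfinadd x' sn]
      calc -(x' (pettisIntegral μ F (⋃ j ∈ sn, D j)))
          ≤ |x' (pettisIntegral μ F (⋃ j ∈ sn, D j))| := neg_le_abs _
      _ ≤ ‖x'‖ * ‖pettisIntegral μ F (⋃ j ∈ sn, D j)‖ := abs_dual_le x' _
      _ ≤ ‖x'‖ * C' := mul_le_mul_of_nonneg_left (hCb _ (hUfin sn)) (norm_nonneg _)
      _ = C' * ‖x'‖ := mul_comm _ _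
    linarith
  -- Rosenthal
  obtain ⟨M, hMinf, hMprop⟩ := rosenthal (fun k j => |y k (pettisIntegral μ F (D j))|)
    (fun k j => abs_nonneg _) (K := 2 * C')
    (fun k s => by
      have := hrowbdd (y k) s
      rwa [hy1 k, mul_one] at this) (ε := ε/4) (by linarith)
  set q : ℕ → Prop := fun n => n ∈ M with hq
  have hqinf : (setOf q).Infinite := hMinf
  set e2 : ℕ → ℕ := Nat.nth q with he2
  have he2inj : Function.Injective e2 := Nat.nth_injective hqinf
  have he2mem : ∀ i, e2 i ∈ M := fun i => Nat.nth_mem_of_infinite hqinf i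
  set E : ℕ → Set Ω := fun i => D (e2 i) with hE
  set z : ℕ → StrongDual ℝ X := fun i => y (e2 i) with hz
  have hz1 : ∀ i, ‖z i‖ = 1 := fun i => hy1 (e2 i)
  have hzE : ∀ i, ε ≤ z i (pettisIntegral μ F (E i)) := by
    intro i
    rw [hz, hE]
    simp only
    rw [hy2 (e2 i)]
    exact hDε (e2 i)
  have hrow : ∀ i (s : Finset ℕ), (∀ j ∈ s, j ≠ i) →
      ∑ j ∈ s, |z i (pettisIntegral μ F (E j))| ≤ ε/4 := by
    intro i s hs
    have himg : ∑ j ∈ s, |z i (pettisIntegral μ F (E j))|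
        = ∑ m ∈ s.image e2, |y (e2 i) (pettisIntegral μ F (D m))| := by
      rw [Finset.sum_image (fun a _ b _ hab => he2inj hab)]
    rw [himg]
    refine hMprop (e2 i) (he2mem i) _ ?_
    intro m hm
    simp only [Finset.coe_image, Set.mem_image, Finset.mem_coe] at hm
    obtain ⟨j, hj, rfl⟩ := hm
    refine ⟨he2mem j, ?_⟩
    simp only [Set.mem_singleton_iff]
    intro hcontra
    exact hs j hj (he2inj hcontra)
  have hErow : ∀ (x' : StrongDual ℝ X) (s : Finset ℕ),
      ∑ j ∈ s, |x' (pettisIntegral μ F (E j))| ≤ 2 * C' * ‖x'‖ := by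
    intro x' s
    have himg : ∑ j ∈ s, |x' (pettisIntegral μ F (E j))|
        = ∑ m ∈ s.image e2, |x' (pettisIntegral μ F (D m))| := by
      rw [Finset.sum_image (fun a _ b _ hab => he2inj hab)]
    rw [himg]
    exact hrowbdd x' _
  -- summability of the series defining T
  have hsummable : ∀ a : C₀(ℕ, ℝ),
      Summable (fun j => a j • pettisIntegral μ F (E j)) := by
    intro a
    rw [summable_iff_vanishing]
    intro U hU
    obtain ⟨ε₀, hε₀, hball⟩ := Metric.mem_nhds_iff.1 hU
    have htend : Tendsto (fun j => a j) atTop (nhds 0) := by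
      have := zero_at_infty (F := ℕ →C₀ ℝ) a
      rwa [cocompact_eq_atTop] at this
    have hsmall : ∀ᶠ j in atTop, |a j| < ε₀ / (2 * C' + 1) := by
      have := Metric.tendsto_nhds.1 htend (ε₀ / (2 * C' + 1)) (by positivity)
      simpa [Real.dist_eq] using this
    obtain ⟨N, hN⟩ := eventually_atTop.1 hsmall
    refine ⟨Finset.range N, fun t ht => ?_⟩
    apply hball
    rw [Metric.mem_ball, dist_zero_right]
    have hbd : ‖∑ j ∈ t, a j • pettisIntegral μ F (E j)‖ ≤ (ε₀ / (2 * C' + 1)) * (2 * C') := by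
      refine NormedSpace.norm_le_dual_bound ℝ _ (by positivity) ?_
      intro x'
      rw [map_sum]
      calc ‖∑ j ∈ t, x' (a j • pettisIntegral μ F (E j))‖
          ≤ ∑ j ∈ t, |a j * x' (pettisIntegral μ F (E j))| := by
            rw [Real.norm_eq_abs]
            refine (Finset.abs_sum_le_sum_abs _ _).trans_eq ?_
            exact Finset.sum_congr rfl fun j _ => by
              rw [ContinuousLinearMap.map_smul, smul_eq_mul]
      _ ≤ ∑ j ∈ t, (ε₀ / (2 * C' + 1)) * |x' (pettisIntegral μ F (E j))| := by
            refine Finset.sum_le_sum fun j hj => ?_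
            rw [abs_mul]
            refine mul_le_mul_of_nonneg_right ?_ (abs_nonneg _)
            have hjN : N ≤ j := by
              by_contra hlt
              exact (Finset.disjoint_left.1 ht hj) (Finset.mem_range.2 (by omega))
            exact (hN j hjN).le
      _ = (ε₀ / (2 * C' + 1)) * ∑ j ∈ t, |x' (pettisIntegral μ F (E j))| := by
            rw [Finset.mul_sum]
      _ ≤ (ε₀ / (2 * C' + 1)) * (2 * C' * ‖x'‖) :=
            mul_le_mul_of_nonneg_left (hErow x' t) (by positivity)
      _ = ((ε₀ / (2 * C' + 1)) * (2 * C')) * ‖x'‖ := by ring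
    calc ‖∑ j ∈ t, a j • pettisIntegral μ F (E j)‖ ≤ (ε₀ / (2 * C' + 1)) * (2 * C') := hbd
    _ < ε₀ := by
          rw [div_mul_eq_mul_div, div_lt_iff₀ (by positivity)]
          nlinarith
  -- bound on scalar tsums
  have htsum_bound : ∀ (a : C₀(ℕ, ℝ)) (x' : StrongDual ℝ X),
      |∑' j, a j * x' (pettisIntegral μ F (E j))| ≤ ‖a‖ * (2 * C' * ‖x'‖) := by
    intro a x'
    have habs : ∀ m : ℕ, ∑ j ∈ Finset.range m, |a j| * |x' (pettisIntegral μ F (E j))|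
        ≤ ‖a‖ * (2 * C' * ‖x'‖) := by
      intro m
      calc ∑ j ∈ Finset.range m, |a j| * |x' (pettisIntegral μ F (E j))|
          ≤ ∑ j ∈ Finset.range m, ‖a‖ * |x' (pettisIntegral μ F (E j))| := by
            refine Finset.sum_le_sum fun j _ => ?_
            refine mul_le_mul_of_nonneg_right ?_ (abs_nonneg _)
            have h1 : ‖a.toBCF j‖ ≤ ‖a.toBCF‖ := BoundedContinuousFunction.norm_coe_le_norm _ j
            rwa [ZeroAtInftyContinuousMap.norm_toBCF_eq_norm, Real.norm_eq_abs] at h1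
      _ = ‖a‖ * ∑ j ∈ Finset.range m, |x' (pettisIntegral μ F (E j))| := by
            rw [Finset.mul_sum]
      _ ≤ ‖a‖ * (2 * C' * ‖x'‖) :=
            mul_le_mul_of_nonneg_left (hErow x' _) (norm_nonneg a)
    have hsummable' : Summable fun j => |a j| * |x' (pettisIntegral μ F (E j))| :=
      summable_of_sum_range_le (fun j => mul_nonneg (abs_nonneg _) (abs_nonneg _)) habs
    have h1 := norm_tsum_le_tsum_norm (f := fun j => a j * x' (pettisIntegral μ F (E j)))
      (by simpa [Real.norm_eq_abs, abs_mul] using hsummable')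
    have h2 : ∑' j, |a j| * |x' (pettisIntegral μ F (E j))| ≤ ‖a‖ * (2 * C' * ‖x'‖) :=
      Summable.tsum_le_of_sum_range_le hsummable' habs
    calc |∑' j, a j * x' (pettisIntegral μ F (E j))|
        ≤ ∑' j, |a j| * |x' (pettisIntegral μ F (E j))| := by
          simpa [Real.norm_eq_abs, abs_mul] using h1
    _ ≤ ‖a‖ * (2 * C' * ‖x'‖) := h2
  -- construct T
  set Tfun : C₀(ℕ, ℝ) → X := fun a => ∑' j, a j • pettisIntegral μ F (E j) with hTfun
  have hTapply : ∀ (a : C₀(ℕ, ℝ)) (x' : StrongDual ℝ X),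
      x' (Tfun a) = ∑' j, a j * x' (pettisIntegral μ F (E j)) := by
    intro a x'
    rw [hTfun]
    simp only
    rw [ContinuousLinearMap.map_tsum x' (hsummable a)]
    exact tsum_congr fun j => by rw [ContinuousLinearMap.map_smul, smul_eq_mul]
  have hadd : ∀ a b : C₀(ℕ, ℝ), Tfun (a + b) = Tfun a + Tfun b := by
    intro a b
    have h1 : (fun j => (a + b) j • pettisIntegral μ F (E j))
        = fun j => a j • pettisIntegral μ F (E j) + b j • pettisIntegral μ F (E j) := by
      funext j
      rw [ZeroAtInftyContinuousMap.coe_add]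
      simp [add_smul]
    calc Tfun (a + b) = ∑' j, (a + b) j • pettisIntegral μ F (E j) := rfl
    _ = ∑' j, (a j • pettisIntegral μ F (E j) + b j • pettisIntegral μ F (E j)) := by rw [h1]
    _ = Tfun a + Tfun b := Summable.tsum_add (hsummable a) (hsummable b)
  have hsmul : ∀ (c : ℝ) (a : C₀(ℕ, ℝ)), Tfun (c • a) = c • Tfun a := by
    intro c a
    have h1 : (fun j => (c • a) j • pettisIntegral μ F (E j))
        = fun j => c • (a j • pettisIntegral μ F (E j)) := by
      funext j
      rw [ZeroAtInftyContinuousMap.coe_smul]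
      simp [smul_smul]
    calc Tfun (c • a) = ∑' j, (c • a) j • pettisIntegral μ F (E j) := rfl
    _ = ∑' j, c • (a j • pettisIntegral μ F (E j)) := by rw [h1]
    _ = c • Tfun a := Summable.tsum_const_smul c (hsummable a)
  set Tlin : C₀(ℕ, ℝ) →ₗ[ℝ] X :=
    { toFun := Tfun
      map_add' := hadd
      map_smul' := hsmul } with hTlin
  have hTbound : ∀ a : C₀(ℕ, ℝ), ‖Tlin a‖ ≤ (2 * C' + 1) * ‖a‖ := by
    intro a
    refine NormedSpace.norm_le_dual_bound ℝ _ (by positivity) ?_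
    intro x'
    have h1 : x' (Tlin a) = ∑' j, a j * x' (pettisIntegral μ F (E j)) := hTapply a x'
    rw [Real.norm_eq_abs, h1]
    calc |∑' j, a j * x' (pettisIntegral μ F (E j))| ≤ ‖a‖ * (2 * C' * ‖x'‖) :=
          htsum_bound a x'
    _ ≤ (2 * C' + 1) * ‖a‖ * ‖x'‖ := by nlinarith [norm_nonneg a, norm_nonneg x', hC'0]
  set T : C₀(ℕ, ℝ) →L[ℝ] X := Tlin.mkContinuous ((2 * C' + 1)) hTbound with hT
  -- lower bound
  have hlower : ∀ a : C₀(ℕ, ℝ), (3 * ε / 4) * ‖a‖ ≤ ‖T a‖ := by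
    intro a
    have hTa : ∀ x' : StrongDual ℝ X,
        x' (T a) = ∑' j, a j * x' (pettisIntegral μ F (E j)) := fun x' => hTapply a x'
    -- for each k, ‖T a‖ ≥ |a k| ε - ‖a‖ ε / 4
    have hklow : ∀ k : ℕ, |a k| * ε - ‖a‖ * (ε/4) ≤ ‖T a‖ := by
      intro k
      have hnormale : ∀ j, |a j| ≤ ‖a‖ := by
        intro j
        have h1 : ‖a.toBCF j‖ ≤ ‖a.toBCF‖ := BoundedContinuousFunction.norm_coe_le_norm _ j
        rwa [ZeroAtInftyContinuousMap.norm_toBCF_eq_norm, Real.norm_eq_abs] at h1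
      have hsum : HasSum (fun j => a j * z k (pettisIntegral μ F (E j))) (z k (T a)) := by
        have h := (hsummable a).hasSum.mapL (z k)
        have heq : ∀ j, z k (a j • pettisIntegral μ F (E j))
            = a j * z k (pettisIntegral μ F (E j)) := fun j => by
          rw [ContinuousLinearMap.map_smul, smul_eq_mul]
        exact h.congr_fun fun j => (heq j).symm
      set f' : ℕ → ℝ := fun j => if j = k then 0 else a j * z k (pettisIntegral μ F (E j))
        with hf'
      have hf'sum : HasSum f' (z k (T a) - a k * z k (pettisIntegral μ F (E k))) := by
        have h2 := hsum.sub (hasSum_ite_eq k (a k * z k (pettisIntegral μ F (E k))))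
        refine h2.congr_fun fun j => ?_
        rw [hf']
        by_cases hj : j = k <;> simp [hj]
      have habs_sum : ∀ m : ℕ, ∑ j ∈ Finset.range m, |f' j| ≤ ‖a‖ * (ε/4) := by
        intro m
        have heq : ∑ j ∈ Finset.range m, |f' j|
            = ∑ j ∈ (Finset.range m).erase k, |a j * z k (pettisIntegral μ F (E j))| := by
          rw [← Finset.sum_erase (Finset.range m) (f := fun j => |f' j|) (a := k)
            (by simp [hf'])]
          refine Finset.sum_congr rfl fun j hj => ?_
          simp [hf', Finset.ne_of_mem_erase hj]
        rw [heq]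
        calc ∑ j ∈ (Finset.range m).erase k, |a j * z k (pettisIntegral μ F (E j))|
            ≤ ∑ j ∈ (Finset.range m).erase k, ‖a‖ * |z k (pettisIntegral μ F (E j))| := by
              refine Finset.sum_le_sum fun j _ => ?_
              rw [abs_mul]
              exact mul_le_mul_of_nonneg_right (hnormale j) (abs_nonneg _)
        _ = ‖a‖ * ∑ j ∈ (Finset.range m).erase k, |z k (pettisIntegral μ F (E j))| := by
              rw [Finset.mul_sum]
        _ ≤ ‖a‖ * (ε/4) := mul_le_mul_of_nonneg_left
              (hrow k _ (fun j hj => Finset.ne_of_mem_erase hj)) (norm_nonneg a)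
      have hsummable' : Summable fun j => |f' j| :=
        summable_of_sum_range_le (fun j => abs_nonneg _) habs_sum
      have htsum_le : ∑' j, |f' j| ≤ ‖a‖ * (ε/4) :=
        Summable.tsum_le_of_sum_range_le hsummable' habs_sum
      have hbound : |z k (T a) - a k * z k (pettisIntegral μ F (E k))| ≤ ‖a‖ * (ε/4) := by
        rw [← hf'sum.tsum_eq]
        have h1 := norm_tsum_le_tsum_norm (f := f') (by simpa [Real.norm_eq_abs] using hsummable')
        calc |∑' j, f' j| ≤ ∑' j, |f' j| := by simpa [Real.norm_eq_abs] using h1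
        _ ≤ ‖a‖ * (ε/4) := htsum_le
      have hzk : ε ≤ z k (pettisIntegral μ F (E k)) := hzE k
      have h1 : |a k| * ε ≤ |a k * z k (pettisIntegral μ F (E k))| := by
        rw [abs_mul]
        refine mul_le_mul_of_nonneg_left ?_ (abs_nonneg _)
        rw [abs_of_nonneg (by linarith)]
        exact hzk
      have h2 : |a k * z k (pettisIntegral μ F (E k))| - ‖a‖ * (ε/4) ≤ |z k (T a)| := by
        have := abs_sub_abs_le_abs_sub (a k * z k (pettisIntegral μ F (E k))) (z k (T a))
        rw [abs_sub_comm] at hbound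
        have h3 := (abs_sub_abs_le_abs_sub _ _).trans hbound
        linarith [abs_abs (z k (T a))]
      have h4 : |z k (T a)| ≤ ‖T a‖ := by
        have := abs_dual_le (z k) (T a)
        rwa [hz1 k, one_mul] at this
      linarith
    -- take k with |a k| close to ‖a‖
    refine le_of_forall_pos_le_add ?_
    intro δ hδ
    have hexists : ∃ k, ‖a‖ - δ/ε < |a k| := by
      by_contra hno
      push_neg at hno
      rcases le_or_gt 0 (‖a‖ - δ/ε) with hpos | hneg
      · have h1 : ‖a.toBCF‖ ≤ ‖a‖ - δ/ε := by
          refine (BoundedContinuousFunction.norm_le hpos).2 ?_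
          intro k
          simpa [Real.norm_eq_abs] using hno k
        rw [ZeroAtInftyContinuousMap.norm_toBCF_eq_norm] at h1
        nlinarith [div_pos hδ hε]
      · have h2 := hno 0
        have h3 := abs_nonneg (a 0)
        linarith
    obtain ⟨k, hk⟩ := hexists
    have := hklow k
    have hδε : |a k| * ε > (‖a‖ - δ/ε) * ε := by
      exact mul_lt_mul_of_pos_right hk hε
    have hcalc : (‖a‖ - δ/ε) * ε = ‖a‖ * ε - δ := by
      field_simp
    nlinarith
  exact hnoc0 ⟨T, 3 * ε / 4, by linarith, hlower⟩


end Proofs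

/-- `F` is Pettis integrable iff it is locally Pettis integrable and
`ν_F` is strongly additive; if `X` has no subspace isomorphic to `c₀` and `ν_F` is
bounded, local Pettis integrability implies Pettis integrability. -/
theorem stmt18 (μ : Measure Ω) (hμ : LocallyDetermined μ)
    (F : Ω → X) (hw : WeaklyMeasurable μ F) :
    (PettisIntegrable μ F ↔
      (LocPettisIntegrable μ F ∧
        ∀ B : ℕ → Set Ω, (∀ n, B n ∈ finiteMeasureSets μ) →
          Pairwise (Function.onFun Disjoint B) →
          Filter.Tendsto (fun n => pettisIntegral μ F (B n)) Filter.atTop (nhds 0))) ∧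
    ((¬∃ T : ZeroAtInftyContinuousMap ℕ ℝ →L[ℝ] X,
        ∃ c : ℝ, 0 < c ∧ ∀ y, c * ‖y‖ ≤ ‖T y‖) →
      (∃ C : ℝ, ∀ B ∈ finiteMeasureSets μ, ‖pettisIntegral μ F B‖ ≤ C) →
      LocPettisIntegrable μ F → PettisIntegrable μ F) := by
  constructor
  · constructor
    · intro hP
      exact ⟨loc_of_pettis hP, SA_of_pettis hP⟩
    · rintro ⟨hL, hSA⟩
      exact pettis_of_loc_SA hμ hw hL hSA
  · intro hnoc0 hbdd hL
    obtain ⟨C, hC⟩ := hbdd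
    exact pettis_of_loc_SA hμ hw hL (SA_of_noc0 hnoc0 hC hL)

end
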